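/- Assume that every diagonal entry of B is nonzero and every row of B̃ is nonzero. Let L be the lower-triangular part of B (L_{ij} = B_{ij} if j ≤ i and L_{ij} = 0 otherwise) and R = B − L. Let sequences x₁^(k) ∈ ℝ^m and x₂^(k) ∈ ℝ^p satisfy, for all k ≥ 0: x₂^(k+1) = x₂^(k) + s(B̃)·d^(k) with d^(k)_i = (b_i − B_i·x₁^(k) − B̃_i·x₂^(k))/(m·‖B̃_i‖₁), and x₁^(k+1) = L⁻¹·(−R·x₁^(k) + b − B̃·x₂^(k+1)). Set q = ‖I − B·L⁻¹‖₁ · ‖I − (1/m)·B̃·s(B̃)·N(B̃)⁻¹‖₁, where ‖·‖₁ is the ℓ1 operator norm. If q < 1, then for every k, ‖B·x₁^(k) + B̃·x₂^(k) − b‖₁ ≤ q^k · ‖B·x₁^(0) + B̃·x₂^(0) − b‖₁; in particular the residuals B·x₁^(k) + B̃·x₂^(k) − b converge to the zero vector as k → ∞. -/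
import Mathlib


/-- The ℓ1-norm of a vector: sum of absolute values of its entries. -/
noncomputable def vecL1 {n : ℕ} (v : Fin n → ℝ) : ℝ := ∑ i, |v i|

/-- The ℓ1 operator norm of a matrix: the maximum absolute column sum. -/
noncomputable def matL1 {a c : ℕ} (M : Matrix (Fin a) (Fin c) ℝ) : ℝ :=
  ⨆ j, ∑ i, |M i j|

lemma vecL1_nonneg {n : ℕ} (v : Fin n → ℝ) : 0 ≤ vecL1 v :=
  Finset.sum_nonneg fun _ _ => abs_nonneg _

lemma matL1_nonneg {a c : ℕ} (M : Matrix (Fin a) (Fin c) ℝ) : 0 ≤ matL1 M :=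
  Real.iSup_nonneg fun _ => Finset.sum_nonneg fun _ _ => abs_nonneg _

lemma colsum_le_matL1 {a c : ℕ} (M : Matrix (Fin a) (Fin c) ℝ) (j : Fin c) :
    ∑ i, |M i j| ≤ matL1 M := by
  unfold matL1
  exact le_ciSup (f := fun j => ∑ i, |M i j|) (Set.Finite.bddAbove (Set.finite_range _)) j

lemma vecL1_mulVec_le {a c : ℕ} (M : Matrix (Fin a) (Fin c) ℝ) (v : Fin c → ℝ) :
    vecL1 (M.mulVec v) ≤ matL1 M * vecL1 v := by
  unfold vecL1
  calc ∑ i, |M.mulVec v i| ≤ ∑ i, ∑ j, |M i j| * |v j| := by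
        refine Finset.sum_le_sum fun i _ => ?_
        simp only [Matrix.mulVec, dotProduct]
        refine (Finset.abs_sum_le_sum_abs _ _).trans ?_
        simp [abs_mul]
    _ = ∑ j, (∑ i, |M i j|) * |v j| := by
        rw [Finset.sum_comm]; simp [Finset.sum_mul]
    _ ≤ ∑ j, matL1 M * |v j| :=
        Finset.sum_le_sum fun j _ =>
          mul_le_mul_of_nonneg_right (colsum_le_matL1 M j) (abs_nonneg _)
    _ = matL1 M * ∑ j, |v j| := by rw [Finset.mul_sum]

/-- if `q = ‖I − B L⁻¹‖₁ ‖I − (1/m) B̃ s N⁻¹‖₁ < 1`, then the residuals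
of the generalized Gauss–Seidel iteration satisfy `‖res k‖₁ ≤ q^k ‖res 0‖₁`, and in
particular they converge to the zero vector. -/
theorem generalized_gauss_seidel_residual_convergence
    (m p : ℕ) (hm : 0 < m) (hp : 0 < p)
    (B : Matrix (Fin m) (Fin m) ℝ) (Bt : Matrix (Fin m) (Fin p) ℝ) (b : Fin m → ℝ)
    (hDiag : ∀ i, B i i ≠ 0) (hRows : ∀ i, Bt i ≠ 0)
    (s : Matrix (Fin p) (Fin m) ℝ) (hs : ∀ j i, s j i = Real.sign (Bt i j))
    (N : Matrix (Fin m) (Fin m) ℝ)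
    (hN : N = Matrix.diagonal (fun i => ∑ j, |Bt i j|))
    (L : Matrix (Fin m) (Fin m) ℝ) (hL : ∀ i j, L i j = if (j : ℕ) ≤ (i : ℕ) then B i j else 0)
    (R : Matrix (Fin m) (Fin m) ℝ) (hR : R = B - L)
    (x₁ : ℕ → Fin m → ℝ) (x₂ : ℕ → Fin p → ℝ)
    (d : ℕ → Fin m → ℝ)
    (hd : ∀ k i, d k i = (b i - (B.mulVec (x₁ k)) i - (Bt.mulVec (x₂ k)) i) /
      ((m : ℝ) * ∑ j, |Bt i j|))
    (hx₂ : ∀ k, x₂ (k + 1) = x₂ k + s.mulVec (d k))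
    (hx₁ : ∀ k, x₁ (k + 1) = L⁻¹.mulVec (-(R.mulVec (x₁ k)) + (b - Bt.mulVec (x₂ (k + 1)))))
    (q : ℝ)
    (hq : q = matL1 (1 - B * L⁻¹) * matL1 (1 - (1 / (m : ℝ)) • (Bt * s * N⁻¹)))
    (hq1 : q < 1) :
    (∀ k, vecL1 (B.mulVec (x₁ k) + Bt.mulVec (x₂ k) - b) ≤
        q ^ k * vecL1 (B.mulVec (x₁ 0) + Bt.mulVec (x₂ 0) - b)) ∧
    Filter.Tendsto (fun k => B.mulVec (x₁ k) + Bt.mulVec (x₂ k) - b)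
      Filter.atTop (nhds 0) := by
  set r : ℕ → Fin m → ℝ := fun k => B.mulVec (x₁ k) + Bt.mulVec (x₂ k) - b with hrdef
  set M₁ : Matrix (Fin m) (Fin m) ℝ := 1 - B * L⁻¹ with hM₁
  set M₂ : Matrix (Fin m) (Fin m) ℝ := 1 - (1 / (m : ℝ)) • (Bt * s * N⁻¹) with hM₂
  -- positivity of row sums of Bt
  have hNpos : ∀ i, (0 : ℝ) < ∑ j, |Bt i j| := by
    intro i
    have h1 : ∃ j, Bt i j ≠ 0 := by
      by_contra h
      push_neg at h
      exact hRows i (funext h)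
    obtain ⟨j, hj⟩ := h1
    exact Finset.sum_pos' (fun _ _ => abs_nonneg _)
      ⟨j, Finset.mem_univ j, abs_pos.mpr hj⟩
  -- explicit inverse of N
  have hNinv : N⁻¹ = Matrix.diagonal (fun i => (∑ j, |Bt i j|)⁻¹) := by
    apply Matrix.inv_eq_right_inv
    rw [hN, Matrix.diagonal_mul_diagonal]
    have h1 : (fun i => (∑ j, |Bt i j|) * (∑ j, |Bt i j|)⁻¹) = fun _ : Fin m => (1 : ℝ) :=
      funext fun i => mul_inv_cancel₀ (hNpos i).ne'
    rw [h1, Matrix.diagonal_one]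
  -- L is invertible
  have hLdet : IsUnit L.det := by
    have ht : L.BlockTriangular OrderDual.toDual := by
      intro i j hij
      rw [hL]
      have hij' : (i : ℕ) < (j : ℕ) := hij
      exact if_neg (by omega)
    rw [Matrix.det_of_lowerTriangular L ht]
    refine isUnit_iff_ne_zero.mpr (Finset.prod_ne_zero_iff.mpr fun i _ => ?_)
    rw [hL]
    simpa using hDiag i
  -- Step A: the d-vector in matrix form
  have hd' : ∀ k, d k = (-(1 / (m : ℝ))) • (N⁻¹.mulVec (r k)) := by
    intro k
    funext i
    rw [hNinv]
    have hri : r k i = B.mulVec (x₁ k) i + Bt.mulVec (x₂ k) i - b i := rfl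
    simp only [Pi.smul_apply, Matrix.mulVec_diagonal, hd k i, hri, smul_eq_mul]
    have hS := (hNpos i).ne'
    have hm' : (m : ℝ) ≠ 0 := Nat.cast_ne_zero.mpr hm.ne'
    field_simp
    ring
  -- Step A: residual after the x₂ update
  have hstep2 : ∀ k, B.mulVec (x₁ k) + Bt.mulVec (x₂ (k + 1)) - b = M₂.mulVec (r k) := by
    intro k
    rw [hx₂ k, hd' k, Matrix.mulVec_add, Matrix.mulVec_smul, Matrix.mulVec_smul,
      Matrix.mulVec_mulVec, Matrix.mulVec_mulVec, hM₂, Matrix.sub_mulVec,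
      Matrix.one_mulVec, Matrix.smul_mulVec, hrdef]
    ext i
    simp only [Pi.add_apply, Pi.sub_apply, Pi.smul_apply, Pi.neg_apply, smul_eq_mul]
    ring
  -- Step B: full recurrence
  have hrec : ∀ k, r (k + 1) = M₁.mulVec (M₂.mulVec (r k)) := by
    intro k
    have hr' : -(R.mulVec (x₁ k)) + (b - Bt.mulVec (x₂ (k + 1)))
        = L.mulVec (x₁ k) - M₂.mulVec (r k) := by
      rw [← hstep2 k, hR, Matrix.sub_mulVec]
      ext i
      simp only [Pi.add_apply, Pi.sub_apply, Pi.neg_apply]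
      ring
    have hx₁' : x₁ (k + 1) = x₁ k - L⁻¹.mulVec (M₂.mulVec (r k)) := by
      rw [hx₁ k, hr', Matrix.mulVec_sub, Matrix.mulVec_mulVec,
        Matrix.nonsing_inv_mul L hLdet, Matrix.one_mulVec]
    show B.mulVec (x₁ (k + 1)) + Bt.mulVec (x₂ (k + 1)) - b = _
    have h2 := hstep2 k
    set v := M₂.mulVec (r k) with hv
    rw [hx₁', Matrix.mulVec_sub, Matrix.mulVec_mulVec, hM₁, Matrix.sub_mulVec,
      Matrix.one_mulVec]
    ext i
    have h2i := congrFun h2 i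
    simp only [Pi.add_apply, Pi.sub_apply] at h2i ⊢
    linarith [h2i]
  have hq0 : 0 ≤ q := hq ▸ mul_nonneg (matL1_nonneg _) (matL1_nonneg _)
  have key : ∀ k, vecL1 (r (k + 1)) ≤ q * vecL1 (r k) := by
    intro k
    rw [hrec k, hq]
    calc vecL1 (M₁.mulVec (M₂.mulVec (r k)))
        ≤ matL1 M₁ * vecL1 (M₂.mulVec (r k)) := vecL1_mulVec_le _ _
      _ ≤ matL1 M₁ * (matL1 M₂ * vecL1 (r k)) :=
          mul_le_mul_of_nonneg_left (vecL1_mulVec_le _ _) (matL1_nonneg _)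
      _ = matL1 M₁ * matL1 M₂ * vecL1 (r k) := by ring
  have bound : ∀ k, vecL1 (r k) ≤ q ^ k * vecL1 (r 0) := by
    intro k
    induction k with
    | zero => simp
    | succ n ih =>
      calc vecL1 (r (n + 1)) ≤ q * vecL1 (r n) := key n
        _ ≤ q * (q ^ n * vecL1 (r 0)) := mul_le_mul_of_nonneg_left ih hq0
        _ = q ^ (n + 1) * vecL1 (r 0) := by ring
  refine ⟨bound, ?_⟩
  have hten : Filter.Tendsto (fun k => q ^ k * vecL1 (r 0)) Filter.atTop (nhds 0) := by
    simpa using (tendsto_pow_atTop_nhds_zero_of_lt_one hq0 hq1).mul_const (vecL1 (r 0))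
  rw [tendsto_pi_nhds]
  intro i
  refine squeeze_zero_norm (a := fun k => q ^ k * vecL1 (r 0)) (fun n => ?_) hten
  calc ‖r n i‖ = |r n i| := Real.norm_eq_abs _
    _ ≤ vecL1 (r n) :=
        Finset.single_le_sum (f := fun j => |r n j|) (fun _ _ => abs_nonneg _)
          (Finset.mem_univ i)
    _ ≤ q ^ n * vecL1 (r 0) := bound n
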